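/- Let T ~ PB(p_1,…,p_n) be a Poisson binomial random variable and let X be an independent exponential random variable with mean 1/λ where 0 < λ ≤ 1. Then for every θ ∈ ℝ, Pr(T + X > θn) ≤ exp(−nλ(θ − p̄ − eλ/2)), where p̄ = (1/n)Σ_{i=1}^n p_i and e is Euler's number. -/

import Mathlib

open scoped BigOperators

/-- Probability mass function of the Poisson binomial distribution `PB(p₁,…,pₙ)`. -/
noncomputable def pbPMF (n : ℕ) (p : Fin n → ℝ) (t : ℕ) : ℝ :=
  ∑ s ∈ Finset.powersetCard t (Finset.univ : Finset (Fin n)),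
    (∏ i ∈ s, p i) * ∏ i ∈ sᶜ, (1 - p i)

/-- Survival function of an exponential random variable `X ≥ 0` with rate `lam`
(mean `1/lam`): `Pr(X > s) = min 1 (exp (-lam * s))`. -/
noncomputable def expSurv (lam s : ℝ) : ℝ :=
  min 1 (Real.exp (-(lam * s)))

/-- `Pr(T + X > θ·n)` for `T ~ PB(p)` and `X` exponential with rate `lam`,
independent of `T`. -/
noncomputable def prExceed (n : ℕ) (p : Fin n → ℝ) (lam θ : ℝ) : ℝ :=
  ∑ t ∈ Finset.range (n + 1), pbPMF n p t * expSurv lam (θ * n - t)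

lemma mgf_pb (n : ℕ) (p : Fin n → ℝ) (x : ℝ) :
    ∑ t ∈ Finset.range (n + 1), pbPMF n p t * x ^ t
      = ∏ i, (1 - p i + p i * x) := by
  have h := Finset.prod_add (fun i => p i * x) (fun i => 1 - p i) (Finset.univ : Finset (Fin n))
  rw [Finset.powerset_card_biUnion, Finset.sum_biUnion (fun i _ j _ hij => Finset.pairwise_disjoint_powersetCard _ hij)] at h
  simp only [Finset.card_univ, Fintype.card_fin] at h
  rw [show (∏ i : Fin n, (1 - p i + p i * x)) = ∏ i : Fin n, (p i * x + (1 - p i)) by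
    apply Finset.prod_congr rfl; intro i _; ring, h]
  apply Finset.sum_congr rfl
  intro t _
  rw [pbPMF, Finset.sum_mul]
  apply Finset.sum_congr rfl
  intro s hs
  have hcard : s.card = t := (Finset.mem_powersetCard.mp hs).2
  rw [Finset.prod_mul_distrib, Finset.prod_const, hcard, Finset.compl_eq_univ_sdiff]
  ring

lemma exp_taylor_bound {lam : ℝ} (h0 : 0 ≤ lam) (h1 : lam ≤ 1) :
    Real.exp lam ≤ 1 + lam + Real.exp 1 * lam ^ 2 / 2 := by
  have h := Real.exp_bound' h0 h1 (n := 2) (by norm_num)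
  have he : (3 : ℝ) / 2 ≤ Real.exp 1 := by
    have := Real.add_one_le_exp (1 : ℝ); linarith
  have h2 : (∑ m ∈ Finset.range 2, lam ^ m / m.factorial) + lam ^ 2 * (2 + 1) / ((2:ℕ).factorial * 2)
      ≤ 1 + lam + Real.exp 1 * lam ^ 2 / 2 := by
    simp [Finset.sum_range_succ, Nat.factorial]
    nlinarith [sq_nonneg lam]
  exact h.trans (by exact_mod_cast h2)

lemma pbPMF_nonneg (n : ℕ) (p : Fin n → ℝ) (hp : ∀ i, 0 ≤ p i ∧ p i ≤ 1) (t : ℕ) :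
    0 ≤ pbPMF n p t := by
  apply Finset.sum_nonneg
  intro s _
  apply mul_nonneg
  · exact Finset.prod_nonneg fun i _ => (hp i).1
  · exact Finset.prod_nonneg fun i _ => by linarith [(hp i).2]

/-- For `T ~ PB(p₁,…,pₙ)` and `X` an independent exponential random variable with
mean `1/lam`, `0 < lam ≤ 1`, and any `θ ∈ ℝ`:
`Pr(T + X > θn) ≤ exp (-n·lam·(θ - p̄ - e·lam/2))` where `p̄ = (1/n) ∑ pᵢ`. -/
theorem prExceed_le_exp (n : ℕ) (p : Fin n → ℝ) (lam θ : ℝ)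
    (hn : 0 < n) (hp : ∀ i, 0 ≤ p i ∧ p i ≤ 1) (hlam : 0 < lam) (hlam1 : lam ≤ 1) :
    prExceed n p lam θ ≤
      Real.exp (-((n : ℝ) * lam * (θ - (∑ i, p i) / n - Real.exp 1 * lam / 2))) := by
  set E := Real.exp lam with hE
  have step1 : prExceed n p lam θ ≤
      ∑ t ∈ Finset.range (n + 1), pbPMF n p t * (Real.exp (-(lam * (θ * n))) * E ^ t) := by
    apply Finset.sum_le_sum
    intro t _
    apply mul_le_mul_of_nonneg_left _ (pbPMF_nonneg n p hp t)
    calc expSurv lam (θ * n - t) ≤ Real.exp (-(lam * (θ * n - t))) := min_le_right _ _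
      _ = Real.exp (-(lam * (θ * n))) * E ^ t := by
          rw [hE, ← Real.exp_nat_mul, ← Real.exp_add]
          ring_nf
  have step2 : ∑ t ∈ Finset.range (n + 1), pbPMF n p t * (Real.exp (-(lam * (θ * n))) * E ^ t)
      = Real.exp (-(lam * (θ * n))) * ∏ i, (1 - p i + p i * E) := by
    rw [← mgf_pb n p E, Finset.mul_sum]
    apply Finset.sum_congr rfl
    intro t _; ring
  have key : ∀ i : Fin n, 1 - p i + p i * E ≤ Real.exp (p i * (lam + Real.exp 1 * lam ^ 2 / 2)) := by
    intro i
    have hE1 : 1 ≤ E := by rw [hE]; exact Real.one_le_exp hlam.le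
    have hEb : E ≤ 1 + lam + Real.exp 1 * lam ^ 2 / 2 := exp_taylor_bound hlam.le hlam1
    have h1 : 1 - p i + p i * E ≤ 1 + p i * (lam + Real.exp 1 * lam ^ 2 / 2) := by
      nlinarith [(hp i).1, (hp i).2]
    exact h1.trans (by rw [add_comm]; exact Real.add_one_le_exp _)
  have step3 : ∏ i, (1 - p i + p i * E) ≤
      Real.exp (∑ i, p i * (lam + Real.exp 1 * lam ^ 2 / 2)) := by
    rw [Real.exp_sum]
    apply Finset.prod_le_prod
    · intro i _
      have hE1 : 1 ≤ E := by rw [hE]; exact Real.one_le_exp hlam.le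
      nlinarith [(hp i).1, (hp i).2]
    · intro i _; exact key i
  have hS : ∑ i, p i ≤ n := by
    calc ∑ i, p i ≤ ∑ _i : Fin n, (1 : ℝ) := Finset.sum_le_sum fun i _ => (hp i).2
      _ = n := by simp
  have step4 : Real.exp (-(lam * (θ * n))) * Real.exp (∑ i, p i * (lam + Real.exp 1 * lam ^ 2 / 2))
      ≤ Real.exp (-((n : ℝ) * lam * (θ - (∑ i, p i) / n - Real.exp 1 * lam / 2))) := by
    rw [← Real.exp_add, Real.exp_le_exp]
    have hsum : ∑ i, p i * (lam + Real.exp 1 * lam ^ 2 / 2)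
        = (∑ i, p i) * (lam + Real.exp 1 * lam ^ 2 / 2) := by rw [← Finset.sum_mul]
    rw [hsum]
    have hn' : (0 : ℝ) < n := by exact_mod_cast hn
    have hfield : -((n : ℝ) * lam * (θ - (∑ i, p i) / n - Real.exp 1 * lam / 2))
        = -(lam * (θ * n)) + (∑ i, p i) * lam + n * (Real.exp 1 * lam ^ 2 / 2) := by
      field_simp
      ring
    rw [hfield]
    have hexp1 : (0:ℝ) < Real.exp 1 := Real.exp_pos 1
    nlinarith [sq_nonneg lam, mul_pos hexp1 (mul_pos hlam hlam)]
  calc prExceed n p lam θ ≤ _ := step1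
    _ = _ := step2
    _ ≤ Real.exp (-(lam * (θ * n))) * Real.exp (∑ i, p i * (lam + Real.exp 1 * lam ^ 2 / 2)) := by
        apply mul_le_mul_of_nonneg_left step3 (Real.exp_pos _).le
    _ ≤ _ := step4
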